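/- Let A be a symmetric positive definite n×n real matrix, C a symmetric positive definite n×n real matrix, B an n×n real matrix, and Λ an n×n real matrix satisfying Λ A⁻¹ Λᵀ = C. Define S = C + B A⁻¹ Bᵀ and Ŝ = (B + Λ) A⁻¹ (B + Λ)ᵀ, and assume that the mixed term Λ A⁻¹ Bᵀ + B A⁻¹ Λᵀ is positive semidefinite and that Ŝ is invertible. Then Ŝ − S is positive semidefinite, and every eigenvalue of Ŝ⁻¹ S (over ℂ) is real and lies in the interval [1/2, 1]. -/

import Mathlib

open Matrix
open scoped ComplexOrder
open scoped MatrixOrder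

private lemma sqrt_quad_eq (n : ℕ) (M : Matrix (Fin n) (Fin n) ℝ) (hM : M.PosSemidef)
    (v : Fin n → ℂ) :
    star v ⬝ᵥ (M.map (algebraMap ℝ ℂ)) *ᵥ v
      = star (((CFC.sqrt M).map (algebraMap ℝ ℂ)) *ᵥ v) ⬝ᵥ (((CFC.sqrt M).map (algebraMap ℝ ℂ)) *ᵥ v) := by
  set f := algebraMap ℝ ℂ with hf
  set R := CFC.sqrt M with hR
  have hRh : Rᴴ = R := (CFC.sqrt_nonneg M).posSemidef.1
  have hst : Function.Semiconj (f : ℝ → ℂ) star star := by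
    intro a; simp [hf, Complex.conj_ofReal]
  have hRfh : (R.map f)ᴴ = R.map f := by
    rw [← Matrix.conjTranspose_map f hst, hRh]
  have hMRR : M = R * R := (CFC.sqrt_mul_sqrt_self M hM.nonneg).symm
  rw [hMRR, Matrix.map_mul, ← Matrix.mulVec_mulVec, Matrix.dotProduct_mulVec,
    Matrix.star_mulVec, hRfh]

private lemma quad_nonneg (n : ℕ) (M : Matrix (Fin n) (Fin n) ℝ) (hM : M.PosSemidef)
    (v : Fin n → ℂ) :
    0 ≤ star v ⬝ᵥ (M.map (algebraMap ℝ ℂ)) *ᵥ v := by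
  rw [sqrt_quad_eq n M hM v]
  exact dotProduct_star_self_nonneg _

private lemma quad_pos (n : ℕ) (M : Matrix (Fin n) (Fin n) ℝ) (hM : M.PosDef)
    (v : Fin n → ℂ) (hv : v ≠ 0) :
    0 < star v ⬝ᵥ (M.map (algebraMap ℝ ℂ)) *ᵥ v := by
  rw [sqrt_quad_eq n M hM.posSemidef v]
  apply Matrix.dotProduct_star_self_pos_iff.mpr
  intro hw
  set f := algebraMap ℝ ℂ
  set R := CFC.sqrt M with hR
  have hdetM : M.det ≠ 0 := ne_of_gt hM.det_pos
  have hMRR : M = R * R := (CFC.sqrt_mul_sqrt_self M hM.posSemidef.nonneg).symm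
  have hdetR : R.det ≠ 0 := by
    intro h
    apply hdetM
    rw [hMRR, Matrix.det_mul, h, mul_zero]
  have hdetRf : (R.map f).det ≠ 0 := by
    have : (R.map f).det = f R.det := (RingHom.map_det f R).symm
    rw [this]
    simpa using hdetR
  exact hdetRf (Matrix.exists_mulVec_eq_zero_iff.mp ⟨v, hv, hw⟩)

/-- Matching strategy two-sided spectral bound: if `Lam A⁻¹ Lamᵀ = C`,
`S = C + B A⁻¹ Bᵀ`, `Shat = (B + Lam) A⁻¹ (B + Lam)ᵀ`, the mixed term
`Lam A⁻¹ Bᵀ + B A⁻¹ Lamᵀ` is positive semidefinite and `Shat` is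
invertible, then `Shat - S` is positive semidefinite and every eigenvalue
of `Shat⁻¹ S` (over `ℂ`) is real and lies in `[1/2, 1]`. -/
theorem matching_strategy_eigenvalue_bounds (n : ℕ)
    (A C B Lam : Matrix (Fin n) (Fin n) ℝ)
    (hA : A.PosDef) (hC : C.PosDef)
    (hLam : Lam * A⁻¹ * Lamᵀ = C)
    (S Shat : Matrix (Fin n) (Fin n) ℝ)
    (hS : S = C + B * A⁻¹ * Bᵀ)
    (hShat : Shat = (B + Lam) * A⁻¹ * (B + Lam)ᵀ)
    (hmixed : (Lam * A⁻¹ * Bᵀ + B * A⁻¹ * Lamᵀ).PosSemidef)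
    (hShatUnit : IsUnit Shat) :
    (Shat - S).PosSemidef ∧
      ∀ z ∈ spectrum ℂ ((Shat⁻¹ * S).map (algebraMap ℝ ℂ)),
        z.im = 0 ∧ (1 / 2 : ℝ) ≤ z.re ∧ z.re ≤ 1 := by
  have hAinv : A⁻¹.PosSemidef := hA.inv.posSemidef
  have key1 : Shat - S = Lam * A⁻¹ * Bᵀ + B * A⁻¹ * Lamᵀ := by
    rw [hS, hShat, ← hLam]
    simp only [transpose_add]
    noncomm_ring
  have key2 : S + S - Shat = (Lam - B) * A⁻¹ * (Lam - B)ᵀ := by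
    rw [hS, hShat, ← hLam]
    simp only [transpose_add, transpose_sub]
    noncomm_ring
  have part1 : (Shat - S).PosSemidef := by rw [key1]; exact hmixed
  have psd2 : (S + S - Shat).PosSemidef := by
    rw [key2]
    have := hAinv.mul_mul_conjTranspose_same (Lam - B)
    rwa [conjTranspose_eq_transpose_of_trivial] at this
  have hSpos : S.PosDef := by
    rw [hS]
    have := hAinv.mul_mul_conjTranspose_same B
    rw [conjTranspose_eq_transpose_of_trivial] at this
    exact hC.add_posSemidef this
  have hShatpos : Shat.PosDef := by
    have h : Shat = S + (Shat - S) := by abel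
    rw [h]
    exact hSpos.add_posSemidef part1
  refine ⟨part1, ?_⟩
  intro z hz
  set f := algebraMap ℝ ℂ with hfdef
  rw [spectrum.mem_iff, Matrix.isUnit_iff_isUnit_det, isUnit_iff_ne_zero, not_not] at hz
  obtain ⟨v, hv0, hveq⟩ := Matrix.exists_mulVec_eq_zero_iff.mpr hz
  have hMv : ((Shat⁻¹ * S).map f) *ᵥ v = z • v := by
    rw [sub_mulVec, sub_eq_zero] at hveq
    rw [← hveq, Algebra.algebraMap_eq_smul_one, smul_mulVec, one_mulVec]
  have hdet : IsUnit Shat.det := (Matrix.isUnit_iff_isUnit_det _).mp hShatUnit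
  have hkey : (S.map f) *ᵥ v = z • ((Shat.map f) *ᵥ v) := by
    have h1 : (Shat.map f) *ᵥ (((Shat⁻¹ * S).map f) *ᵥ v) = (S.map f) *ᵥ v := by
      rw [Matrix.mulVec_mulVec, ← Matrix.map_mul, ← mul_assoc,
        Matrix.mul_nonsing_inv _ hdet, one_mul]
    rw [← h1, hMv, Matrix.mulVec_smul]
  set a := star v ⬝ᵥ (S.map f) *ᵥ v with hadef
  set b := star v ⬝ᵥ (Shat.map f) *ᵥ v with hbdef
  have hab : a = z * b := by
    rw [hadef, hkey, dotProduct_smul, smul_eq_mul, hbdef]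
  have hbpos : 0 < b := quad_pos n Shat hShatpos v hv0
  have hd1 : 0 ≤ b - a := by
    have h := quad_nonneg n (Shat - S) part1 v
    have hmap : (Shat - S).map f = Shat.map f - S.map f := by
      ext i j; simp [Matrix.map_apply, hfdef]
    rwa [hmap, sub_mulVec, dotProduct_sub] at h
  have hd2 : 0 ≤ a + a - b := by
    have h := quad_nonneg n (S + S - Shat) psd2 v
    have hmap : (S + S - Shat).map f = S.map f + S.map f - Shat.map f := by
      ext i j; simp [Matrix.map_apply, hfdef]
    rwa [hmap, sub_mulVec, add_mulVec, dotProduct_sub, dotProduct_add] at h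
  rw [Complex.lt_def] at hbpos
  rw [Complex.le_def] at hd1 hd2
  simp only [Complex.zero_re, Complex.zero_im, Complex.sub_re, Complex.sub_im,
    Complex.add_re, Complex.add_im] at hbpos hd1 hd2
  obtain ⟨hbre, hbim⟩ := hbpos
  have hbim' : b.im = 0 := hbim.symm
  have haim : a.im = 0 := by
    have := hd1.2
    linarith
  have haim2 : a.im = z.im * b.re + z.re * b.im := by
    rw [hab, Complex.mul_im]; ring
  have hare : a.re = z.re * b.re - z.im * b.im := by
    rw [hab, Complex.mul_re]
  have hzim : z.im = 0 := by
    rw [haim, hbim'] at haim2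
    have : z.im * b.re = 0 := by linarith
    rcases mul_eq_zero.mp this with h | h
    · exact h
    · exact absurd h (ne_of_gt hbre)
  refine ⟨hzim, ?_, ?_⟩
  · -- 1/2 ≤ z.re
    have h2 := hd2.1
    rw [hare, hzim, hbim'] at *
    nlinarith [hd2.1, hare]
  · have h1 := hd1.1
    nlinarith [hare, hzim, hbim', hbre]
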